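/- Let S be a bounded selfadjoint operator on a complex Hilbert space K with Sp(S) ⊆ [r, R], r < R, and let f : [r, R] → ℝ be continuous and convex. Then for every unit vector x ∈ K, ⟨f(S) x, x⟩ ≤ ( (⟨S x, x⟩ − r) f(R) + (R − ⟨S x, x⟩) f(r) ) / (R − r). -/

import Mathlib

open scoped InnerProductSpace

theorem cfc_secant_bound
    {K : Type*} [NormedAddCommGroup K] [InnerProductSpace ℂ K] [CompleteSpace K]
    (S : K →L[ℂ] K) (hS : IsSelfAdjoint S) (r R : ℝ) (hrR : r < R)
    (hspec : spectrum ℝ S ⊆ Set.Icc r R)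
    (f : ℝ → ℝ) (hfc : ContinuousOn f (Set.Icc r R))
    (hf : ConvexOn ℝ (Set.Icc r R) f)
    (x : K) (hx : ‖x‖ = 1) :
    (⟪(cfc f S) x, x⟫_ℂ).re ≤
      (((⟪S x, x⟫_ℂ).re - r) * f R + (R - (⟪S x, x⟫_ℂ).re) * f r) / (R - r) := by
  have hRr : (0:ℝ) < R - r := by linarith
  set c : ℝ := (f R - f r) / (R - r) with hc
  set d : ℝ := (R * f r - r * f R) / (R - r) with hd
  -- the secant line dominates f on [r, R]
  have hsec : ∀ t ∈ Set.Icc r R, f t ≤ c * t + d := by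
    intro t ht
    obtain ⟨h1, h2⟩ := ht
    have hl : (0:ℝ) ≤ (R - t) / (R - r) := div_nonneg (by linarith) hRr.le
    have hm : (0:ℝ) ≤ (t - r) / (R - r) := div_nonneg (by linarith) hRr.le
    have hsum : (R - t) / (R - r) + (t - r) / (R - r) = 1 := by
      rw [← add_div, div_eq_one_iff_eq hRr.ne']; ring
    have key := hf.2 (Set.left_mem_Icc.mpr hrR.le) (Set.right_mem_Icc.mpr hrR.le)
      hl hm hsum
    have harg : ((R - t) / (R - r)) • r + ((t - r) / (R - r)) • R = t := by
      simp only [smul_eq_mul]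
      rw [div_mul_eq_mul_div, div_mul_eq_mul_div, ← add_div,
        div_eq_iff hRr.ne']; ring
    rw [harg] at key
    simp only [smul_eq_mul] at key
    calc f t ≤ (R - t) / (R - r) * f r + (t - r) / (R - r) * f R := key
      _ = c * t + d := by rw [hc, hd]; field_simp; ring
  -- operator inequality
  have hcont : ContinuousOn f (spectrum ℝ S) := hfc.mono hspec
  have hmono : cfc f S ≤ cfc (fun t => c * t + d) S :=
    cfc_mono (fun t ht => hsec t (hspec ht)) hcont (by fun_prop)
  have heq : cfc (fun t : ℝ => c * t + d) S = c • S + d • (1 : K →L[ℂ] K) := by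
    rw [cfc_add S (fun t => c * t) (fun _ => d) (by fun_prop) (by fun_prop),
      cfc_const_mul c (fun t : ℝ => t) S (by fun_prop), cfc_id' ℝ S, cfc_const d S hS,
      Algebra.algebraMap_eq_smul_one]
  rw [heq] at hmono
  have hineq := (ContinuousLinearMap.le_def _ _).mp hmono |>.inner_nonneg_left x
  simp only [RCLike.re_to_complex, ContinuousLinearMap.sub_apply] at hineq
  have hxx : ⟪x, x⟫_ℂ = 1 := by
    rw [inner_self_eq_norm_sq_to_K, hx]; norm_num
  have hval : (⟪(c • S + d • (1 : K →L[ℂ] K)) x, x⟫_ℂ).re = c * (⟪S x, x⟫_ℂ).re + d := by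
    have h1 : ⟪c • S x, x⟫_ℂ = c • ⟪S x, x⟫_ℂ := by
      rw [RCLike.real_smul_eq_coe_smul (K := ℂ) c (S x), inner_smul_real_left]
    have h2 : ⟪(d : ℝ) • x, x⟫_ℂ = d • ⟪x, x⟫_ℂ := by
      rw [RCLike.real_smul_eq_coe_smul (K := ℂ) d x, inner_smul_real_left]
    simp [ContinuousLinearMap.add_apply, ContinuousLinearMap.smul_apply,
      ContinuousLinearMap.one_apply, inner_add_left, h1, h2, hxx, Complex.smul_re, hx]
  have hle : (⟪(cfc f S) x, x⟫_ℂ).re ≤ c * (⟪S x, x⟫_ℂ).re + d := by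
    rw [← hval]
    have hsub : (⟪(c • S + d • (1 : K →L[ℂ] K)) x - (cfc f S) x, x⟫_ℂ).re =
        (⟪(c • S + d • (1 : K →L[ℂ] K)) x, x⟫_ℂ).re - (⟪(cfc f S) x, x⟫_ℂ).re := by
      rw [inner_sub_left, Complex.sub_re]
    replace hineq := (Complex.nonneg_iff.mp hineq).1
    rw [hsub] at hineq
    linarith
  calc (⟪(cfc f S) x, x⟫_ℂ).re ≤ c * (⟪S x, x⟫_ℂ).re + d := hle
    _ = (((⟪S x, x⟫_ℂ).re - r) * f R + (R - (⟪S x, x⟫_ℂ).re) * f r) / (R - r) := by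
        rw [hc, hd]; field_simp; ring
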